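/- Let f̂ ∈ R̄_β maximize Φ_s over R̄_β with û = u_{f̂}, α > 0, and assume χ_{{û>α}} ≤ f̂ ≤ χ_{{û≥α}} a.e. Let Ẽ be any measurable set with {û > α} ⊂ Ẽ ⊂ {û ≥ α} and |Ẽ| = β, and let v = u_{χ_Ẽ}. Then the bilinear pairing ⟨û, û − v⟩_s = (1/2)∬(û(x)-û(y))((û−v)(x)-(û−v)(y))/|x-y|^{n+2s} dx dy equals 0. -/

import Mathlib

open MeasureTheory Set Filter Topology

/-- Squared Gagliardo–Nirenberg seminorm `[u]_s^2`. -/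
noncomputable def gagliardoSq (n : ℕ) (s : ℝ) (u : (Fin n → ℝ) → ℝ) : ℝ :=
  (1/2) * ∫ p : (Fin n → ℝ) × (Fin n → ℝ),
    (u p.1 - u p.2) ^ 2 / ‖p.1 - p.2‖ ^ ((n : ℝ) + 2 * s)

/-- The bilinear Gagliardo pairing `⟨u,v⟩_s`. -/
noncomputable def fracPairing (n : ℕ) (s : ℝ) (u v : (Fin n → ℝ) → ℝ) : ℝ :=
  (1/2) * ∫ p : (Fin n → ℝ) × (Fin n → ℝ),
    (u p.1 - u p.2) * (v p.1 - v p.2) / ‖p.1 - p.2‖ ^ ((n : ℝ) + 2 * s)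

/-- Finiteness of the Gagliardo seminorm. -/
def GagliardoFinite (n : ℕ) (s : ℝ) (u : (Fin n → ℝ) → ℝ) : Prop :=
  Integrable (fun p : (Fin n → ℝ) × (Fin n → ℝ) =>
    (u p.1 - u p.2) ^ 2 / ‖p.1 - p.2‖ ^ ((n : ℝ) + 2 * s))

/-- Membership in `H^s(ℝ^n)`. -/
def MemHs (n : ℕ) (s : ℝ) (u : (Fin n → ℝ) → ℝ) : Prop :=
  MemLp u 2 (volume : Measure (Fin n → ℝ)) ∧ GagliardoFinite n s u

/-- Membership in `H^s_0(D)`. -/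
def MemHs0 (n : ℕ) (s : ℝ) (D : Set (Fin n → ℝ)) (u : (Fin n → ℝ) → ℝ) : Prop :=
  MemHs n s u ∧ ∀ᵐ x : Fin n → ℝ, x ∉ D → u x = 0

/-- `u` is the weak solution of `(-Δ)^s u = f` in `D`, `u = 0` in `Dᶜ`. -/
def IsWeakSol (n : ℕ) (s : ℝ) (D : Set (Fin n → ℝ))
    (f u : (Fin n → ℝ) → ℝ) : Prop :=
  MemHs0 n s D u ∧ ∀ v : (Fin n → ℝ) → ℝ, MemHs0 n s D v →
    fracPairing n s u v = ∫ x in D, f x * v x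

/-- The weak closure `R̄_β` of the rearrangement class. -/
def Rbar (n : ℕ) (D : Set (Fin n → ℝ)) (β : ℝ) : Set ((Fin n → ℝ) → ℝ) :=
  {f | (∀ᵐ x : Fin n → ℝ, x ∈ D → 0 ≤ f x ∧ f x ≤ 1) ∧ ∫ x in D, f x = β}

private lemma aesm_pairdiff {n : ℕ} {u : (Fin n → ℝ) → ℝ}
    (hu : AEStronglyMeasurable u (volume : Measure (Fin n → ℝ))) :
    AEStronglyMeasurable (fun p : (Fin n → ℝ) × (Fin n → ℝ) => u p.1 - u p.2) volume := by
  rw [Measure.volume_eq_prod]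
  exact (hu.comp_quasiMeasurePreserving Measure.quasiMeasurePreserving_fst).sub
    (hu.comp_quasiMeasurePreserving Measure.quasiMeasurePreserving_snd)

private lemma abs_mul_div_le_aux (A B d : ℝ) (hd0 : 0 ≤ d) :
    ‖A * B / d‖ ≤ (A ^ 2 / d + B ^ 2 / d) / 2 := by
  rcases eq_or_lt_of_le hd0 with h | h
  · rw [← h]
    simp
  · have h1 : |A * B| ≤ (A ^ 2 + B ^ 2) / 2 := by
      have h2 := two_mul_le_add_sq |A| |B|
      rw [sq_abs, sq_abs, mul_assoc] at h2
      rw [abs_mul]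
      linarith
    have hnorm : ‖A * B / d‖ = |A * B| / d := by
      rw [Real.norm_eq_abs, abs_div, abs_of_pos h]
    rw [hnorm]
    calc |A * B| / d ≤ ((A ^ 2 + B ^ 2) / 2) / d := by gcongr
      _ = (A ^ 2 / d + B ^ 2 / d) / 2 := by rw [← add_div, div_right_comm]

private lemma cross_integrable {n : ℕ} {s : ℝ} {u v : (Fin n → ℝ) → ℝ}
    (hu : AEStronglyMeasurable u (volume : Measure (Fin n → ℝ)))
    (hv : AEStronglyMeasurable v (volume : Measure (Fin n → ℝ)))
    (hGu : GagliardoFinite n s u) (hGv : GagliardoFinite n s v) :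
    Integrable (fun p : (Fin n → ℝ) × (Fin n → ℝ) =>
      (u p.1 - u p.2) * (v p.1 - v p.2) / ‖p.1 - p.2‖ ^ ((n:ℝ) + 2*s)) := by
  have hd : Measurable (fun p : (Fin n → ℝ) × (Fin n → ℝ) =>
      ‖p.1 - p.2‖ ^ ((n:ℝ) + 2*s)) :=
    (measurable_fst.sub measurable_snd).norm.pow_const _
  have hmeas : AEStronglyMeasurable (fun p : (Fin n → ℝ) × (Fin n → ℝ) =>
      (u p.1 - u p.2) * (v p.1 - v p.2) / ‖p.1 - p.2‖ ^ ((n:ℝ) + 2*s)) volume :=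
    by simpa [div_eq_mul_inv, Pi.mul_def, Pi.inv_def] using
      ((aesm_pairdiff hu).mul (aesm_pairdiff hv)).mul hd.inv.aestronglyMeasurable
  refine Integrable.mono' ((hGu.add hGv).div_const 2) hmeas (Eventually.of_forall fun p => ?_)
  exact abs_mul_div_le_aux _ _ _ (Real.rpow_nonneg (norm_nonneg _) _)

private lemma fracPairing_comm (n : ℕ) (s : ℝ) (u v : (Fin n → ℝ) → ℝ) :
    fracPairing n s u v = fracPairing n s v u := by
  unfold fracPairing
  exact congrArg _ (congrArg (integral volume) (funext fun p => by ring))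

private lemma fracPairing_self_sub {n : ℕ} {s : ℝ} {u v : (Fin n → ℝ) → ℝ}
    (hu : AEStronglyMeasurable u (volume : Measure (Fin n → ℝ)))
    (hv : AEStronglyMeasurable v (volume : Measure (Fin n → ℝ)))
    (hGu : GagliardoFinite n s u) (hGv : GagliardoFinite n s v) :
    fracPairing n s u (u - v) = fracPairing n s u u - fracPairing n s u v := by
  have hAA : Integrable (fun p : (Fin n → ℝ) × (Fin n → ℝ) =>
      (u p.1 - u p.2) * (u p.1 - u p.2) / ‖p.1 - p.2‖ ^ ((n:ℝ) + 2*s)) := by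
    have hGu' := hGu
    unfold GagliardoFinite at hGu'
    simpa only [pow_two] using hGu'
  have hAB := cross_integrable hu hv hGu hGv
  unfold fracPairing
  have key : (∫ p : (Fin n → ℝ) × (Fin n → ℝ),
        (u p.1 - u p.2) * ((u - v) p.1 - (u - v) p.2) / ‖p.1 - p.2‖ ^ ((n:ℝ) + 2*s))
      = ∫ p : (Fin n → ℝ) × (Fin n → ℝ),
        ((u p.1 - u p.2) * (u p.1 - u p.2) / ‖p.1 - p.2‖ ^ ((n:ℝ) + 2*s)
          - (u p.1 - u p.2) * (v p.1 - v p.2) / ‖p.1 - p.2‖ ^ ((n:ℝ) + 2*s)) :=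
    congrArg (integral volume) (funext fun p => by
      simp only [Pi.sub_apply]; ring)
  rw [key, integral_sub hAA hAB]
  ring

/-- for a maximizer `f̂` with `χ_{û>α} ≤ f̂ ≤ χ_{û≥α}` a.e., and any set
`Ẽ` with `{û>α} ⊆ Ẽ ⊆ {û≥α}` in `D`, `|Ẽ| = β`, and `v = u_{χ_Ẽ}`, the pairing
`⟨û, û − v⟩_s` vanishes. -/
theorem pairing_vanishes (n : ℕ) (s : ℝ) (hs0 : 0 < s) (hs1 : s < 1)
    (D : Set (Fin n → ℝ)) (hD : IsOpen D) (hDb : Bornology.IsBounded D)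
    (β : ℝ) (hβ : 0 < β) (hβD : ENNReal.ofReal β < volume D)
    (fhat uhat : (Fin n → ℝ) → ℝ) (hfhat : fhat ∈ Rbar n D β)
    (hsol : IsWeakSol n s D fhat uhat)
    (hmax : ∀ f u, f ∈ Rbar n D β → IsWeakSol n s D f u →
      gagliardoSq n s u ≤ gagliardoSq n s uhat)
    (α : ℝ) (hα : 0 < α)
    (hsandwich : ∀ᵐ x ∂(volume.restrict D),
      (α < uhat x → fhat x = 1) ∧ (uhat x < α → fhat x = 0))
    (Etil : Set (Fin n → ℝ)) (hEtil : MeasurableSet Etil)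
    (hsub1 : {x ∈ D | α < uhat x} ⊆ Etil) (hsub2 : Etil ⊆ {x ∈ D | α ≤ uhat x})
    (hEβ : volume Etil = ENNReal.ofReal β)
    (v : (Fin n → ℝ) → ℝ)
    (hv : IsWeakSol n s D (Etil.indicator (fun _ => (1:ℝ))) v) :
    fracPairing n s uhat (uhat - v) = 0 := by
  have huasm : AEStronglyMeasurable uhat (volume : Measure (Fin n → ℝ)) :=
    hsol.1.1.1.aestronglyMeasurable
  have hvasm : AEStronglyMeasurable v (volume : Measure (Fin n → ℝ)) :=
    hv.1.1.1.aestronglyMeasurable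
  rw [fracPairing_self_sub huasm hvasm hsol.1.1.2 hv.1.1.2,
    hsol.2 uhat hsol.1, fracPairing_comm, hv.2 uhat hsol.1]
  -- now ⊢ ∫ x in D, fhat x * uhat x - ∫ x in D, Etil.indicator 1 x * uhat x = 0
  haveI : IsFiniteMeasure (volume.restrict D) :=
    ⟨by rw [Measure.restrict_apply_univ]; exact hDb.measure_lt_top⟩
  have hEsubD : Etil ⊆ D := fun x hx => (hsub2 hx).1
  have hu_int : Integrable uhat (volume.restrict D) :=
    memLp_one_iff_integrable.mp
      ((hsol.1.1.1.restrict D).mono_exponent one_le_two)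
  have hf_int : Integrable fhat (volume.restrict D) := by
    by_contra h
    have hc := hfhat.2
    rw [integral_undef h] at hc
    linarith
  have hbnd : ∀ᵐ x ∂(volume.restrict D), 0 ≤ fhat x ∧ fhat x ≤ 1 := by
    filter_upwards [ae_restrict_of_ae hfhat.1, ae_restrict_mem hD.measurableSet]
      with x hx hxD using hx hxD
  have hfu_int : Integrable (fun x => fhat x * uhat x) (volume.restrict D) := by
    refine hu_int.abs.mono' (hf_int.1.mul hu_int.1) ?_
    filter_upwards [hbnd] with x hx
    rw [Real.norm_eq_abs, abs_mul]
    calc |fhat x| * |uhat x| ≤ 1 * |uhat x| := by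
          gcongr
          rw [abs_le]; constructor <;> linarith [hx.1, hx.2]
      _ = |uhat x| := one_mul _
  have hχ_int : Integrable (Etil.indicator (fun _ => (1:ℝ))) (volume.restrict D) :=
    (integrable_const (1:ℝ)).indicator hEtil
  have hχu_int : Integrable (fun x => Etil.indicator (fun _ => (1:ℝ)) x * uhat x)
      (volume.restrict D) := by
    refine hu_int.abs.mono' (hχ_int.1.mul hu_int.1) (Eventually.of_forall fun x => ?_)
    rw [Real.norm_eq_abs, abs_mul]
    by_cases hx : x ∈ Etil
    · simp [Set.indicator_of_mem hx]
    · simp [Set.indicator_of_notMem hx, abs_nonneg]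
  have hχβ : ∫ x in D, Etil.indicator (fun _ => (1:ℝ)) x = β := by
    rw [integral_indicator hEtil, setIntegral_const, smul_eq_mul, mul_one,
      measureReal_def, Measure.restrict_apply hEtil, Set.inter_eq_left.mpr hEsubD, hEβ,
      ENNReal.toReal_ofReal hβ.le]
  have hkey : ∀ᵐ x ∂(volume.restrict D),
      fhat x * uhat x = Etil.indicator (fun _ => (1:ℝ)) x * uhat x
        + α * (fhat x - Etil.indicator (fun _ => (1:ℝ)) x) := by
    filter_upwards [hsandwich, ae_restrict_mem hD.measurableSet] with x hx hxD
    rcases lt_trichotomy (uhat x) α with h | h | h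
    · have hf0 := hx.2 h
      have hxE : x ∉ Etil := fun hm => absurd (hsub2 hm).2 (not_le.mpr h)
      simp [hf0, Set.indicator_of_notMem hxE]
    · rw [h]; ring
    · have hf1 := hx.1 h
      have hxE : x ∈ Etil := hsub1 ⟨hxD, h⟩
      rw [hf1, Set.indicator_of_mem hxE]; ring
  have hmain : ∫ x in D, fhat x * uhat x = ∫ x in D, Etil.indicator (fun _ => (1:ℝ)) x * uhat x := by
    have hg : Integrable (fun x => α * (fhat x - Etil.indicator (fun _ => (1:ℝ)) x))
        (volume.restrict D) := (hf_int.sub hχ_int).const_mul α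
    rw [integral_congr_ae hkey, integral_add hχu_int hg,
      integral_const_mul, integral_sub hf_int hχ_int, hfhat.2, hχβ]
    ring
  rw [hmain, sub_self]
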